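/- Let F be a field of characteristic zero, and let (V, ∇) be a differential module over F((t)) of rank n. Fix a positive integer d, and let V[t^{1/d}] = V ⊗_{F((t))} F((t^{1/d})) with its induced connection. If V[t^{1/d}] is Fredholm (as a differential module over F((t)), equivalently its de Rham complex over F is perfect), then (V, ∇) is Fredholm. More precisely, as a differential module over F((t)), V[t^{1/d}] decomposes as the direct sum over i = 0,...,d-1 of V ⊗ χ_{i/d}, where χ_{i/d} is the rank one connection d + (i/d) dt/t; in particular V is a direct summand of V[t^{1/d}]. -/

import Mathlib

open HahnSeries

/-- The formal derivative (`d/dt`, resp. `d/du` on the extension) on Laurent series. -/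
noncomputable def lderiv (F : Type*) [CommRing F] : LaurentSeries F →ₗ[F] LaurentSeries F where
  toFun f :=
    { coeff := fun n => (n + 1 : ℤ) • f.coeff (n + 1)
      isPWO_support' := by
        have hsub : (Function.support fun n : ℤ => (n + 1 : ℤ) • f.coeff (n + 1)) ⊆
            (fun m : ℤ => m - 1) '' f.support := by
          intro n hn
          refine ⟨n + 1, fun h0 => ?_, by ring⟩
          apply hn
          simp [h0]
        exact ((f.isPWO_support.image_of_monotoneOn
          (fun a _ b _ hab => sub_le_sub_right hab 1)).mono hsub) }
  map_add' f g := by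
    ext m
    simp [smul_add]
  map_smul' a f := by
    ext m
    simp only [HahnSeries.coeff_smul, RingHom.id_apply, zsmul_eq_mul, smul_eq_mul]
    push_cast
    ring

/-- The inclusion `F((t)) → F((t^{1/d}))`, modelled as the ring endomorphism of Laurent
series sending `t` to `u^d` (i.e. scaling all exponents by `d`). -/
noncomputable def rootEmbedding (F : Type*) [CommRing F] (d : ℕ) (hd : 0 < d) :
    LaurentSeries F →+* LaurentSeries F :=
  HahnSeries.embDomainRingHom (zmultiplesHom ℤ (d : ℤ))
    (by
      intro a b hab
      have h' : a * (d : ℤ) = b * (d : ℤ) := by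
        simpa [zmultiplesHom_apply, smul_eq_mul] using hab
      exact mul_right_cancel₀ (by exact_mod_cast hd.ne' : (d : ℤ) ≠ 0) h')
    (by
      intro a b
      simp only [zmultiplesHom_apply, smul_eq_mul]
      exact mul_le_mul_iff_of_pos_right (by exact_mod_cast hd))
open HahnSeries in
lemma coeff_finsum {F : Type*} [CommRing F] {α : Type*} (s : Finset α)
    (f : α → LaurentSeries F) (e : ℤ) :
    (∑ a ∈ s, f a).coeff e = ∑ a ∈ s, (f a).coeff e := by
  induction s using Finset.cons_induction with
  | empty => simp
  | cons a s ha ih => simp [Finset.sum_cons, ih]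

open HahnSeries in
lemma rootEmbedding_coeff {F : Type*} [CommRing F] (d : ℕ) (hd : 0 < d)
    (f : LaurentSeries F) (m : ℤ) :
    (rootEmbedding F d hd f).coeff (m * d) = f.coeff m := by
  have : ((zmultiplesHom ℤ (d : ℤ)) m) = m * d := by simp [zmultiplesHom_apply]
  rw [rootEmbedding]
  show (HahnSeries.embDomain _ f).coeff (m * d) = f.coeff m
  rw [← this]
  exact HahnSeries.embDomain_coeff

open HahnSeries in
lemma rootEmbedding_coeff_notdvd {F : Type*} [CommRing F] (d : ℕ) (hd : 0 < d)
    (f : LaurentSeries F) (e : ℤ) (h : ¬ ((d : ℤ) ∣ e)) :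
    (rootEmbedding F d hd f).coeff e = 0 := by
  rw [rootEmbedding]
  show (HahnSeries.embDomain _ f).coeff e = 0
  apply HahnSeries.embDomain_notin_range
  rintro ⟨m, hm⟩
  apply h
  exact ⟨m, by rw [← hm]; show m • (d : ℤ) = _; rw [smul_eq_mul, mul_comm]⟩

open HahnSeries in
lemma lderiv_single {F : Type*} [CommRing F] (k : ℤ) (a : F) :
    lderiv F (single k a) = single (k - 1) ((k : ℤ) • a) := by
  ext n
  show (n + 1 : ℤ) • (single k a).coeff (n + 1) = _
  by_cases h : n = k - 1
  · subst h
    simp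
  · rw [coeff_single_of_ne (by omega), coeff_single_of_ne h, smul_zero]
open HahnSeries in
/-- Extract the coefficients in degrees `≡ r mod d` and rescale exponents. -/
noncomputable def pir (F : Type*) [CommRing F] (d : ℕ) (hd : 0 < d) (r : ℤ) :
    LaurentSeries F →ₗ[F] LaurentSeries F where
  toFun g :=
    { coeff := fun m => g.coeff (d * m + r)
      isPWO_support' := by
        have hsub : (Function.support fun m : ℤ => g.coeff (d * m + r)) ⊆
            (fun n : ℤ => (n - r) / d) '' g.support := by
          intro m hm
          refine ⟨d * m + r, hm, ?_⟩
          simp only [add_sub_cancel_right]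
          rw [mul_comm, Int.mul_ediv_cancel _ (by exact_mod_cast hd.ne')]
        exact ((g.isPWO_support.image_of_monotoneOn
          (fun a _ b _ hab => Int.ediv_le_ediv (by exact_mod_cast hd)
            (sub_le_sub_right hab r))).mono hsub) }
  map_add' f g := by ext m; simp
  map_smul' a f := by ext m; simp

lemma pir_coeff {F : Type*} [CommRing F] (d : ℕ) (hd : 0 < d) (r : ℤ)
    (g : LaurentSeries F) (m : ℤ) :
    (pir F d hd r g).coeff m = g.coeff (d * m + r) := rfl

open HahnSeries in
lemma single_mul_coeff {F : Type*} [CommRing F] (k : ℤ) (c : F) (x : LaurentSeries F)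
    (e : ℤ) : ((single k c : LaurentSeries F) * x).coeff e = c * x.coeff (e - k) := by
  have := HahnSeries.coeff_single_mul_add (r := c) (x := x) (a := e - k) (b := k)
  rwa [sub_add_cancel] at this

open HahnSeries in
lemma pir_single_mul_root {F : Type*} [CommRing F] (d : ℕ) (hd : 0 < d) (r : ℤ) (c : F)
    (f : LaurentSeries F) :
    pir F d hd r ((single r c : LaurentSeries F) * rootEmbedding F d hd f) = c • f := by
  ext m
  rw [pir_coeff, single_mul_coeff, add_sub_cancel_right, mul_comm (d : ℤ) m,
    rootEmbedding_coeff]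
  simp

open HahnSeries in
lemma pir_single_mul_root_ne {F : Type*} [CommRing F] (d : ℕ) (hd : 0 < d) (r k : ℤ)
    (c : F) (f : LaurentSeries F) (h : ¬ ((d : ℤ) ∣ k - r)) :
    pir F d hd r ((single k c : LaurentSeries F) * rootEmbedding F d hd f) = 0 := by
  ext m
  rw [pir_coeff, single_mul_coeff, rootEmbedding_coeff_notdvd]
  · simp
  · intro ⟨j, hj⟩
    apply h
    exact ⟨m - j, by linarith⟩

open HahnSeries in
/-- Decomposition of a Laurent series into its `d` residue classes. -/
lemma root_decomp {F : Type*} [CommRing F] (d : ℕ) (hd : 0 < d) (g : LaurentSeries F) :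
    ∑ r ∈ Finset.range d, (single (r : ℤ) 1 : LaurentSeries F) *
      rootEmbedding F d hd (pir F d hd (r : ℤ) g) = g := by
  ext e
  rw [coeff_finsum]
  have hr0 : (e % d).toNat ∈ Finset.range d := by
    rw [Finset.mem_range]
    have h1 : 0 ≤ e % (d : ℤ) := Int.emod_nonneg e (by exact_mod_cast hd.ne')
    have h2 : e % (d : ℤ) < d := Int.emod_lt_of_pos e (by exact_mod_cast hd)
    omega
  rw [Finset.sum_eq_single_of_mem _ hr0]
  · have h1 : 0 ≤ e % (d : ℤ) := Int.emod_nonneg e (by exact_mod_cast hd.ne')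
    have hcast : ((e % d).toNat : ℤ) = e % d := Int.toNat_of_nonneg h1
    rw [single_mul_coeff, hcast]
    have hdvd : (d : ℤ) ∣ (e - e % d) := Int.dvd_self_sub_of_emod_eq rfl
    obtain ⟨j, hj⟩ := hdvd
    have : e - e % d = j * d := by rw [hj]; ring
    rw [this, rootEmbedding_coeff, pir_coeff]
    rw [one_mul]
    congr 1
    omega
  · intro r hr hne
    rw [single_mul_coeff, rootEmbedding_coeff_notdvd, mul_zero]
    intro ⟨j, hj⟩
    apply hne
    have h1 : 0 ≤ e % (d : ℤ) := Int.emod_nonneg e (by exact_mod_cast hd.ne')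
    have h2 : e % (d : ℤ) < d := Int.emod_lt_of_pos e (by exact_mod_cast hd)
    have hrd : (r : ℤ) < d := by exact_mod_cast Finset.mem_range.mp hr
    have hr0' : 0 ≤ (r : ℤ) := Int.natCast_nonneg r
    -- e = d * j + r, so e % d = r
    have : e % (d : ℤ) = r := by
      have he : e = d * j + r := by linarith
      rw [he, add_comm, Int.add_mul_emod_self_left, Int.emod_eq_of_lt hr0' hrd]
    omega
open HahnSeries in
lemma Cmul_eq_smulF {F : Type*} [Field F] (a : F) (g : LaurentSeries F) :
    (single (0 : ℤ) a : LaurentSeries F) * g = a • g := by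
  ext e
  rw [single_mul_coeff]
  simp [HahnSeries.coeff_smul]

open HahnSeries in
lemma single_zero_smul_eq {F : Type*} [Field F] {M : Type*} [AddCommMonoid M]
    [Module (LaurentSeries F) M] [Module F M] [IsScalarTower F (LaurentSeries F) M]
    (a : F) (w : M) :
    (single (0 : ℤ) a : LaurentSeries F) • w = a • w := by
  have h1 : (single (0 : ℤ) a : LaurentSeries F) = a • (1 : LaurentSeries F) := by
    ext e
    by_cases h : e = 0 <;>
      simp [HahnSeries.coeff_smul, HahnSeries.coeff_one, HahnSeries.coeff_single, h]
  rw [h1, smul_assoc, one_smul]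

open HahnSeries in
lemma rootEmbedding_single {F : Type*} [Field F] (d : ℕ) (hd : 0 < d) (k : ℤ) (c : F) :
    rootEmbedding F d hd (single k c) = single (k * d) c := by
  rw [rootEmbedding]
  show HahnSeries.embDomain _ (single k c) = single (k * d) c
  rw [HahnSeries.embDomain_single]
  norm_num [zmultiplesHom_apply]
  show single (k • (d : ℤ)) c = _
  rw [smul_eq_mul]

open HahnSeries in
/-- The "residue `d-1` part, in `V`-coordinates" projection `V' → V`. -/
noncomputable def PdMap {F : Type*} [Field F] (d : ℕ) (hd : 0 < d) {n : ℕ}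
    {V : Type*} [AddCommGroup V] [Module (LaurentSeries F) V] [Module F V]
    [IsScalarTower F (LaurentSeries F) V]
    {V' : Type*} [AddCommGroup V'] [Module (LaurentSeries F) V'] [Module F V']
    [IsScalarTower F (LaurentSeries F) V']
    (bV : Module.Basis (Fin n) (LaurentSeries F) V) (bV' : Module.Basis (Fin n) (LaurentSeries F) V') :
    V' →ₗ[F] V where
  toFun w := ∑ i, pir F d hd ((d : ℤ) - 1) (bV'.repr w i) • bV i
  map_add' w₁ w₂ := by
    simp only [map_add, Finsupp.add_apply, add_smul]
    rw [Finset.sum_add_distrib]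
  map_smul' a w := by
    simp only [RingHom.id_apply]
    rw [show a • w = (single (0 : ℤ) a : LaurentSeries F) • w from
      (single_zero_smul_eq a w).symm, map_smul, Finset.smul_sum]
    refine Finset.sum_congr rfl fun i _ => ?_
    rw [Finsupp.smul_apply, smul_eq_mul, Cmul_eq_smulF, map_smul, smul_assoc]

lemma PdMap_apply {F : Type*} [Field F] (d : ℕ) (hd : 0 < d) {n : ℕ}
    {V : Type*} [AddCommGroup V] [Module (LaurentSeries F) V] [Module F V]
    [IsScalarTower F (LaurentSeries F) V]
    {V' : Type*} [AddCommGroup V'] [Module (LaurentSeries F) V'] [Module F V']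
    [IsScalarTower F (LaurentSeries F) V']
    (bV : Module.Basis (Fin n) (LaurentSeries F) V) (bV' : Module.Basis (Fin n) (LaurentSeries F) V')
    (w : V') :
    PdMap d hd bV bV' w = ∑ i, pir F d hd ((d : ℤ) - 1) (bV'.repr w i) • bV i := rfl
/-- **Lemma \ref{l:extn-scalars}** (Fredholmness descends along ramified extensions): let
`(V, ∇)` be a differential module over `F((t))` (`F` a field of characteristic zero), `d > 0`
an integer, and `(V', ∇')` the induced differential module `V[t^{1/d}] = V ⊗_{F((t))}
F((t^{1/d}))` — i.e. `V'` is the base change of `V` along `t ↦ u^d`, with connection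
determined by the Leibniz rule and `∇'(ι v) = d·u^{d-1} · ι(∇ v)` (the factor coming from
`dt = d·u^{d-1} du`).  If `V[t^{1/d}]` is Fredholm (its de Rham complex has
finite-dimensional kernel and cokernel over `F`), then `(V, ∇)` is Fredholm. -/
theorem stmt_6 (F : Type*) [Field F] [CharZero F] (d : ℕ) (hd : 0 < d) (n : ℕ)
    {V : Type*} [AddCommGroup V] [Module (LaurentSeries F) V] [Module F V]
    [IsScalarTower F (LaurentSeries F) V]
    (bV : Module.Basis (Fin n) (LaurentSeries F) V)
    (nabla : V →ₗ[F] V)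
    (hLeib : ∀ (f : LaurentSeries F) (v : V),
      nabla (f • v) = f • nabla v + (lderiv F f) • v)
    {V' : Type*} [AddCommGroup V'] [Module (LaurentSeries F) V'] [Module F V']
    [IsScalarTower F (LaurentSeries F) V']
    (nabla' : V' →ₗ[F] V')
    (hLeib' : ∀ (g : LaurentSeries F) (w : V'),
      nabla' (g • w) = g • nabla' w + (lderiv F g) • w)
    -- `ι : V → V' = V[t^{1/d}]` is semilinear over `t ↦ u^d` and carries a basis to a basis,
    -- i.e. `V'` is the base change of `V`:
    (ι : V →ₛₗ[rootEmbedding F d hd] V')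
    (bV' : Module.Basis (Fin n) (LaurentSeries F) V')
    (hbasis : ∀ i, bV' i = ι (bV i))
    -- compatibility of the connections: `∇'(ι v) = d·u^{d-1} • ι(∇ v)`:
    (hcompat : ∀ v : V,
      nabla' (ι v) =
        (HahnSeries.single ((d : ℤ) - 1) (d : F) : LaurentSeries F) • ι (nabla v)) :
    (FiniteDimensional F (LinearMap.ker nabla') ∧
        FiniteDimensional F (V' ⧸ LinearMap.range nabla')) →
      FiniteDimensional F (LinearMap.ker nabla) ∧
        FiniteDimensional F (V ⧸ LinearMap.range nabla) := by
  rintro ⟨hk, hc⟩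
  haveI := hk
  haveI := hc
  -- `ι` is `F`-linear
  have hιsmulF : ∀ (a : F) (v : V), ι (a • v) = a • ι v := by
    intro a v
    rw [← single_zero_smul_eq a v, ι.map_smulₛₗ, rootEmbedding_single, zero_mul,
      single_zero_smul_eq]
  -- coordinates of `ι v`
  have hreprι : ∀ (v : V) (i : Fin n),
      bV'.repr (ι v) i = rootEmbedding F d hd (bV.repr v i) := by
    intro v i
    have hv : ι v = ∑ j, rootEmbedding F d hd (bV.repr v j) • bV' j := by
      conv_lhs => rw [← bV.sum_repr v]
      rw [map_sum]
      refine Finset.sum_congr rfl fun j _ => ?_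
      rw [ι.map_smulₛₗ, hbasis]
    rw [hv, map_sum]
    simp [Module.Basis.repr_self, Finsupp.smul_single, Finsupp.single_apply]
  have hreprsmul : ∀ (g : LaurentSeries F) (v : V) (i : Fin n),
      bV'.repr (g • ι v) i = g * rootEmbedding F d hd (bV.repr v i) := by
    intro g v i
    rw [map_smul, Finsupp.smul_apply, hreprι, smul_eq_mul]
  -- key evaluations of the projection `PdMap`
  have key1 : ∀ (c : F) (v : V),
      PdMap d hd bV bV' ((HahnSeries.single ((d : ℤ) - 1) c : LaurentSeries F) • ι v)
        = c • v := by
    intro c v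
    rw [PdMap_apply]
    calc ∑ i, pir F d hd ((d : ℤ) - 1)
          (bV'.repr ((HahnSeries.single ((d : ℤ) - 1) c : LaurentSeries F) • ι v) i) • bV i
        = ∑ i, (c • bV.repr v i) • bV i := by
          refine Finset.sum_congr rfl fun i _ => ?_
          rw [hreprsmul, pir_single_mul_root]
      _ = c • v := by
          simp_rw [smul_assoc]
          rw [← Finset.smul_sum, bV.sum_repr]
  have key0 : ∀ (k : ℤ) (c : F) (v : V), ¬ ((d : ℤ) ∣ k - ((d : ℤ) - 1)) →
      PdMap d hd bV bV' ((HahnSeries.single k c : LaurentSeries F) • ι v) = 0 := by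
    intro k c v h
    rw [PdMap_apply]
    refine Finset.sum_eq_zero fun i _ => ?_
    rw [hreprsmul, pir_single_mul_root_ne _ _ _ _ _ _ h, zero_smul]
  -- `ι` is injective
  have hιinj : Function.Injective ι := by
    intro v₁ v₂ h
    have h1 := key1 1 v₁
    have h2 := key1 1 v₂
    rw [h] at h1
    rw [one_smul] at h1 h2
    exact h1.symm.trans h2
  -- the `F`-linear version of `ι`
  let ιF : V →ₗ[F] V' :=
    { toFun := ι
      map_add' := fun x y => ι.map_add x y
      map_smul' := fun a v => hιsmulF a v }
  constructor
  · -- kernel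
    have hkmap : ∀ v ∈ LinearMap.ker nabla, ιF v ∈ LinearMap.ker nabla' := by
      intro v hv
      rw [LinearMap.mem_ker] at hv ⊢
      show nabla' (ι v) = 0
      rw [hcompat, hv, map_zero, smul_zero]
    refine FiniteDimensional.of_injective (ιF.restrict hkmap) ?_
    intro x y hxy
    have : ι (x : V) = ι (y : V) := congrArg Subtype.val hxy
    exact Subtype.ext (hιinj this)
  · -- cokernel
    let φ : V →ₗ[F] V' :=
      { toFun := fun v => (HahnSeries.single ((d : ℤ) - 1) (1 : F) : LaurentSeries F) • ι v
        map_add' := fun x y => by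
          show (HahnSeries.single ((d : ℤ) - 1) (1 : F) : LaurentSeries F) • ι (x + y) = _
          rw [ι.map_add, smul_add]
        map_smul' := fun a v => by
          show (HahnSeries.single ((d : ℤ) - 1) (1 : F) : LaurentSeries F) • ι (a • v) = _
          rw [hιsmulF, ← single_zero_smul_eq a (ι v), smul_smul, mul_comm, ← smul_smul,
            single_zero_smul_eq]
          rfl }
    have hφapp : ∀ v : V,
        φ v = (HahnSeries.single ((d : ℤ) - 1) (1 : F) : LaurentSeries F) • ι v :=
      fun _ => rfl
    have hdF : (d : F) ≠ 0 := Nat.cast_ne_zero.mpr hd.ne'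
    have hsingle_d : (HahnSeries.single ((d : ℤ) - 1) (d : F) : LaurentSeries F)
        = (d : F) • HahnSeries.single ((d : ℤ) - 1) (1 : F) := by
      ext e
      by_cases h : e = (d : ℤ) - 1 <;>
        simp [HahnSeries.coeff_smul, HahnSeries.coeff_single, h]
    -- the main point: `φ v ∈ range nabla' → v ∈ range nabla`
    have hφrange : ∀ v : V, φ v ∈ LinearMap.range nabla' → v ∈ LinearMap.range nabla := by
      intro v hv
      obtain ⟨w, hw⟩ := hv
      set vr : ℕ → V := fun r => ∑ i, pir F d hd (r : ℤ) (bV'.repr w i) • bV i with hvr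
      have hwdec : w = ∑ r ∈ Finset.range d,
          (HahnSeries.single ((r : ℕ) : ℤ) (1 : F) : LaurentSeries F) • ι (vr r) := by
        conv_lhs => rw [← bV'.sum_repr w]
        calc ∑ i, bV'.repr w i • bV' i
            = ∑ i, ∑ r ∈ Finset.range d,
                ((HahnSeries.single ((r : ℕ) : ℤ) (1 : F) : LaurentSeries F) *
                  rootEmbedding F d hd (pir F d hd (r : ℤ) (bV'.repr w i))) • bV' i := by
              refine Finset.sum_congr rfl fun i _ => ?_
              rw [← Finset.sum_smul, root_decomp]
          _ = ∑ r ∈ Finset.range d, ∑ i,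
                (HahnSeries.single ((r : ℕ) : ℤ) (1 : F) : LaurentSeries F) •
                  (rootEmbedding F d hd (pir F d hd (r : ℤ) (bV'.repr w i)) • ι (bV i)) := by
              rw [Finset.sum_comm]
              refine Finset.sum_congr rfl fun r _ => Finset.sum_congr rfl fun i _ => ?_
              rw [mul_smul, hbasis]
          _ = ∑ r ∈ Finset.range d,
                (HahnSeries.single ((r : ℕ) : ℤ) (1 : F) : LaurentSeries F) • ι (vr r) := by
              refine Finset.sum_congr rfl fun r _ => ?_
              rw [← Finset.smul_sum]
              congr 1
              rw [hvr, map_sum]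
              refine Finset.sum_congr rfl fun i _ => ?_
              rw [ι.map_smulₛₗ]
      have hnw : nabla' w = ∑ r ∈ Finset.range d,
          ((HahnSeries.single (((r : ℕ) : ℤ) + ((d : ℤ) - 1)) (d : F) : LaurentSeries F) •
              ι (nabla (vr r))
            + (HahnSeries.single (((r : ℕ) : ℤ) - 1) (((r : ℕ) : ℤ) • (1 : F)) :
                LaurentSeries F) • ι (vr r)) := by
        conv_lhs => rw [hwdec]
        rw [map_sum]
        refine Finset.sum_congr rfl fun r _ => ?_
        rw [hLeib', hcompat, lderiv_single, smul_smul, HahnSeries.single_mul_single, one_mul]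
      have hv0 : v = PdMap d hd bV bV' (nabla' w) := by
        rw [hw, hφapp]
        have := key1 1 v
        rw [one_smul] at this
        exact this.symm
      rw [hnw, map_sum] at hv0
      have hsum : ∑ r ∈ Finset.range d, PdMap d hd bV bV'
          ((HahnSeries.single (((r : ℕ) : ℤ) + ((d : ℤ) - 1)) (d : F) : LaurentSeries F) •
              ι (nabla (vr r))
            + (HahnSeries.single (((r : ℕ) : ℤ) - 1) (((r : ℕ) : ℤ) • (1 : F)) :
                LaurentSeries F) • ι (vr r))
          = (d : F) • nabla (vr 0) := by
        rw [Finset.sum_eq_single_of_mem 0 (Finset.mem_range.mpr hd)]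
        · rw [map_add]
          have e1 : (((0 : ℕ) : ℤ) + ((d : ℤ) - 1)) = (d : ℤ) - 1 := by push_cast; ring
          have e2 : (((0 : ℕ) : ℤ) • (1 : F)) = (0 : F) := by simp
          rw [e1, e2, key1]
          rw [show (HahnSeries.single (((0 : ℕ) : ℤ) - 1) (0 : F) : LaurentSeries F) = 0 from
            HahnSeries.single_eq_zero, zero_smul, map_zero, add_zero]
        · intro r hr hrne
          have hr1 : 0 < (r : ℤ) := by
            exact_mod_cast Nat.pos_of_ne_zero hrne
          have hr2 : (r : ℤ) < d := by exact_mod_cast Finset.mem_range.mp hr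
          have hnd1 : ¬ ((d : ℤ) ∣ ((r : ℕ) : ℤ) + ((d : ℤ) - 1) - ((d : ℤ) - 1)) := by
            rw [add_sub_cancel_right]
            intro hdvd
            have := Int.le_of_dvd hr1 hdvd
            omega
          have hnd2 : ¬ ((d : ℤ) ∣ ((r : ℕ) : ℤ) - 1 - ((d : ℤ) - 1)) := by
            intro hdvd
            obtain ⟨j, hj⟩ := hdvd
            have hjr : ((r : ℕ) : ℤ) = d * (j + 1) := by linarith [hj]
            have : (d : ℤ) ∣ ((r : ℕ) : ℤ) := ⟨j + 1, hjr⟩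
            have := Int.le_of_dvd hr1 this
            omega
          rw [map_add, key0 _ _ _ hnd1, key0 _ _ _ hnd2, add_zero]
      rw [hsum] at hv0
      exact ⟨(d : F) • vr 0, by rw [map_smul, ← hv0]⟩
    -- build the injection of cokernels
    let q : V →ₗ[F] V' ⧸ LinearMap.range nabla' := (LinearMap.range nabla').mkQ.comp φ
    have hle : LinearMap.range nabla ≤ LinearMap.ker q := by
      rintro _ ⟨x, rfl⟩
      rw [LinearMap.mem_ker]
      show (LinearMap.range nabla').mkQ (φ (nabla x)) = 0
      rw [Submodule.mkQ_apply, Submodule.Quotient.mk_eq_zero]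
      refine ⟨(d : F)⁻¹ • ι x, ?_⟩
      rw [map_smul]
      show (d : F)⁻¹ • nabla' (ι x) = φ (nabla x)
      rw [hcompat, hφapp, hsingle_d, smul_assoc, smul_smul, inv_mul_cancel₀ hdF, one_smul]
    have hge : LinearMap.ker q ≤ LinearMap.range nabla := by
      intro v hv
      rw [LinearMap.mem_ker] at hv
      apply hφrange
      rw [← Submodule.Quotient.mk_eq_zero]
      exact hv
    refine FiniteDimensional.of_injective ((LinearMap.range nabla).liftQ q hle) ?_
    rw [← LinearMap.ker_eq_bot, Submodule.ker_liftQ_eq_bot]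
    exact hge
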